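/- arXiv:2501.07692 — 3 statements merged into one kernel-verified Lean document; each statement's English description precedes it below -/
import Mathlib

section
/- For all integers d ≥ 2 and n ≥ 0, ℰ_{dn}^{(d)} = (-1)^n · #A_{dn}^{(d)}, where #A_{dn}^{(d)} is the number of d-alternating permutations of {1,…,dn}. -/
/-- The generalized Euler number `ℰ_n^{(d)}`: `n!` times the coefficient of `x^n` in the
multiplicative inverse of the formal power series `∑_{k≥0} x^{dk}/(dk)!` over `ℚ`. -/
noncomputable def genEulerQ (d n : ℕ) : ℚ :=
  (n.factorial : ℚ) *
    PowerSeries.coeff (R := ℚ) n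
      (PowerSeries.mk fun m => if d ∣ m then (1 : ℚ) / m.factorial else 0)⁻¹

/-- A permutation `σ` of `{1,…,m}` (in one-line notation `σ_1…σ_m`, where `σ_j = σ ⟨j-1⟩`)
is `d`-alternating if its descent set `Des σ = {i : 1 ≤ i < m, σ_i > σ_{i+1}}` equals
`{di : d ≤ di < m}`, i.e. the descents are exactly the positions divisible by `d`. -/
def IsDAlternating (d : ℕ) {m : ℕ} (σ : Equiv.Perm (Fin m)) : Prop :=
  ∀ i : ℕ, ∀ h : i + 1 < m, (σ ⟨i + 1, h⟩ < σ ⟨i, by omega⟩ ↔ d ∣ (i + 1))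

namespace Stmt9


open Finset Equiv

noncomputable def altCount (d m : ℕ) : ℕ :=
  Nat.card {σ : Equiv.Perm (Fin m) // IsDAlternating d σ}

/-- descents are exactly multiples of `d` below `j`; gap `j` is unconstrained. -/
def PP (d j m : ℕ) (σ : Equiv.Perm (Fin m)) : Prop :=
  ∀ i : ℕ, ∀ h : i + 1 < m, i + 1 ≠ j →
    (σ ⟨i + 1, h⟩ < σ ⟨i, by omega⟩ ↔ (d ∣ (i + 1) ∧ i + 1 < j))

/-- descents are exactly the multiples of `d` that are `≤ d*r`. -/
def RR (d r m : ℕ) (σ : Equiv.Perm (Fin m)) : Prop :=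
  ∀ i : ℕ, ∀ h : i + 1 < m,
    (σ ⟨i + 1, h⟩ < σ ⟨i, by omega⟩ ↔ (d ∣ (i + 1) ∧ i + 1 ≤ d * r))

variable {d j m : ℕ}

section Bij

lemma card_compl_eq (s : Finset (Fin m)) (hs : s.card = j) : sᶜ.card = m - j := by
  rw [Finset.card_compl, hs, Fintype.card_fin]

/-- the permutation built from a `j`-subset `s` (head values) and a head pattern `τ`. -/
def bF (s : Finset (Fin m)) (hs : s.card = j) (τ : Equiv.Perm (Fin j)) : Fin m → Fin m := fun i =>
  if h : (i : ℕ) < j then s.orderEmbOfFin hs (τ ⟨(i : ℕ), h⟩)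
  else sᶜ.orderEmbOfFin (card_compl_eq s hs) ⟨(i : ℕ) - j, by have := i.2; omega⟩

lemma bF_head (s : Finset (Fin m)) (hs : s.card = j) (τ : Equiv.Perm (Fin j)) (i : Fin m) (h : (i : ℕ) < j) :
    bF s hs τ i = s.orderEmbOfFin hs (τ ⟨(i : ℕ), h⟩) := dif_pos h

lemma bF_tail (s : Finset (Fin m)) (hs : s.card = j) (τ : Equiv.Perm (Fin j)) (i : Fin m) (h : ¬ (i : ℕ) < j) :
    bF s hs τ i = sᶜ.orderEmbOfFin (card_compl_eq s hs) ⟨(i : ℕ) - j, by have := i.2; omega⟩ :=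
  dif_neg h

lemma bF_inj (s : Finset (Fin m)) (hs : s.card = j) (τ : Equiv.Perm (Fin j)) : Function.Injective (bF s hs τ) := by
  intro a b hab
  by_cases ha : (a : ℕ) < j <;> by_cases hb : (b : ℕ) < j
  · rw [bF_head s hs τ a ha, bF_head s hs τ b hb] at hab
    have := (s.orderEmbOfFin hs).injective hab
    have := τ.injective this
    exact Fin.ext (by simpa [Fin.ext_iff] using this)
  · rw [bF_head s hs τ a ha, bF_tail s hs τ b hb] at hab
    have h1 : s.orderEmbOfFin hs (τ ⟨(a : ℕ), ha⟩) ∈ s := Finset.orderEmbOfFin_mem _ _ _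
    have h2 := Finset.orderEmbOfFin_mem sᶜ (card_compl_eq s hs) ⟨(b : ℕ) - j, by have := b.2; omega⟩
    rw [hab] at h1
    exact absurd h1 (Finset.mem_compl.mp h2)
  · rw [bF_tail s hs τ a ha, bF_head s hs τ b hb] at hab
    have h1 : s.orderEmbOfFin hs (τ ⟨(b : ℕ), hb⟩) ∈ s := Finset.orderEmbOfFin_mem _ _ _
    have h2 := Finset.orderEmbOfFin_mem sᶜ (card_compl_eq s hs) ⟨(a : ℕ) - j, by have := a.2; omega⟩
    rw [← hab] at h1
    exact absurd h1 (Finset.mem_compl.mp h2)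
  · rw [bF_tail s hs τ a ha, bF_tail s hs τ b hb] at hab
    have := (sᶜ.orderEmbOfFin (card_compl_eq s hs)).injective hab
    have : (a : ℕ) - j = (b : ℕ) - j := by simpa [Fin.ext_iff] using this
    exact Fin.ext (by omega)

/-- the permutation built from `(s, τ)`. -/
noncomputable def bPerm (s : Finset (Fin m)) (hs : s.card = j) (τ : Equiv.Perm (Fin j)) : Equiv.Perm (Fin m) :=
  Equiv.ofBijective (bF s hs τ) (Finite.injective_iff_bijective.mp (bF_inj s hs τ))

lemma bPerm_apply (s : Finset (Fin m)) (hs : s.card = j) (τ : Equiv.Perm (Fin j)) (i : Fin m) : bPerm s hs τ i = bF s hs τ i := rfl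

lemma bPerm_PP (s : Finset (Fin m)) (hs : s.card = j) (τ : Equiv.Perm (Fin j)) (halt : IsDAlternating d τ) : PP d j m (bPerm s hs τ) := by
  intro i h hne
  rw [bPerm_apply, bPerm_apply]
  by_cases h2 : i + 1 < j
  · have h1 : i < j := by omega
    rw [bF_head s hs τ ⟨i+1, h⟩ h2, bF_head s hs τ ⟨i, by omega⟩ h1]
    rw [(s.orderEmbOfFin hs).lt_iff_lt]
    rw [halt i h2]
    simp [h2]
  · have hj : j ≤ i := by omega
    rw [bF_tail s hs τ ⟨i+1, h⟩ h2, bF_tail s hs τ ⟨i, by omega⟩ (by simp; omega)]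
    rw [(sᶜ.orderEmbOfFin (card_compl_eq s hs)).lt_iff_lt]
    constructor
    · intro hlt
      exfalso
      have : (⟨i + 1 - j, _⟩ : Fin (m - j)) < ⟨i - j, _⟩ := hlt
      rw [Fin.lt_def] at this
      simp at this
      omega
    · intro hc; exfalso; omega

end Bij

lemma bPerm_pair_inj (s s' : Finset (Fin m)) (hs : s.card = j) (hs' : s'.card = j)
    (τ τ' : Equiv.Perm (Fin j)) (hjm : j ≤ m)
    (h : bPerm s hs τ = bPerm s' hs' τ') : s = s' ∧ HEq τ τ' := by
  have happ : ∀ i : Fin m, bF s hs τ i = bF s' hs' τ' i := by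
    intro i
    rw [← bPerm_apply, ← bPerm_apply, h]
  have hmem : ∀ (t : Finset (Fin m)) (ht : t.card = j) (ρ : Equiv.Perm (Fin j)) (x : Fin m),
      x ∈ t ↔ ∃ y : Fin j, bF t ht ρ ⟨(y : ℕ), lt_of_lt_of_le y.2 hjm⟩ = x := by
    intro t ht ρ x
    constructor
    · intro hx
      have : x ∈ Set.range (t.orderEmbOfFin ht) := by
        rw [Finset.range_orderEmbOfFin]; exact_mod_cast hx
      obtain ⟨y, hy⟩ := this
      refine ⟨ρ.symm y, ?_⟩
      rw [bF_head t ht ρ _ (by simpa using (ρ.symm y).2)]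
      simpa using hy
    · rintro ⟨y, rfl⟩
      rw [bF_head t ht ρ _ (by simpa using y.2)]
      exact Finset.orderEmbOfFin_mem _ _ _
  have hss : s = s' := by
    ext x
    rw [hmem s hs τ x, hmem s' hs' τ' x]
    constructor
    · rintro ⟨y, hy⟩; exact ⟨y, by rw [← happ]; exact hy⟩
    · rintro ⟨y, hy⟩; exact ⟨y, by rw [happ]; exact hy⟩
  subst hss
  refine ⟨rfl, heq_of_eq ?_⟩
  ext y
  have := happ ⟨(y : ℕ), lt_of_lt_of_le y.2 hjm⟩
  rw [bF_head s hs τ _ (by simpa using y.2), bF_head s hs τ' _ (by simpa using y.2)] at this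
  have := (s.orderEmbOfFin hs).injective this
  simpa [Fin.ext_iff] using this

lemma bPerm_surj (hjm : j ≤ m) (σ : Equiv.Perm (Fin m)) (hσ : PP d j m σ) :
    ∃ (s : Finset (Fin m)) (hs : s.card = j) (τ : Equiv.Perm (Fin j)),
      IsDAlternating d τ ∧ bPerm s hs τ = σ := by
  classical
  set s : Finset (Fin m) := Finset.image (fun y : Fin j => σ (Fin.castLE hjm y)) Finset.univ with hsdef
  have hinj0 : Function.Injective (fun y : Fin j => σ (Fin.castLE hjm y)) :=
    σ.injective.comp (Fin.castLE_injective hjm)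
  have hs : s.card = j := by
    rw [hsdef, Finset.card_image_of_injective _ hinj0, Finset.card_univ, Fintype.card_fin]
  have hmem : ∀ y : Fin j, σ (Fin.castLE hjm y) ∈ s := by
    intro y; exact Finset.mem_image_of_mem _ (Finset.mem_univ y)
  set τ0 : Fin j → Fin j := fun y => (s.orderIsoOfFin hs).symm ⟨σ (Fin.castLE hjm y), hmem y⟩
    with hτ0
  have hτ0inj : Function.Injective τ0 := by
    intro a b hab
    have := (s.orderIsoOfFin hs).symm.injective hab
    exact hinj0 (congrArg Subtype.val this)
  set τ : Equiv.Perm (Fin j) :=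
    Equiv.ofBijective τ0 (Finite.injective_iff_bijective.mp hτ0inj) with hτ
  have hkey : ∀ y : Fin j, s.orderEmbOfFin hs (τ0 y) = σ (Fin.castLE hjm y) := by
    intro y
    rw [← Finset.coe_orderIsoOfFin_apply, hτ0]
    simp
  have halt : IsDAlternating d τ := by
    intro i h
    have h1 : i < j := by omega
    have hm1 : i + 1 < m := lt_of_lt_of_le h hjm
    show τ0 ⟨i+1, h⟩ < τ0 ⟨i, h1⟩ ↔ _
    rw [hτ0]
    rw [(s.orderIsoOfFin hs).symm.lt_iff_lt, Subtype.mk_lt_mk]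
    have := hσ i hm1 (by omega)
    have hcast : ∀ (a : ℕ) (ha : a < j), Fin.castLE hjm ⟨a, ha⟩ = ⟨a, lt_of_lt_of_le ha hjm⟩ :=
      fun a ha => rfl
    rw [hcast, hcast, this]
    exact ⟨fun ⟨h1', _⟩ => h1', fun h1' => ⟨h1', h⟩⟩
  refine ⟨s, hs, τ, halt, ?_⟩
  ext i
  rw [bPerm_apply]
  by_cases hij : (i : ℕ) < j
  · rw [bF_head s hs τ i hij]
    have : τ ⟨(i : ℕ), hij⟩ = τ0 ⟨(i : ℕ), hij⟩ := rfl
    rw [this, hkey]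
    congr 1
  · rw [bF_tail s hs τ i hij]
    -- tail: σ is increasing there and avoids s
    set g : Fin (m - j) → Fin m := fun x => σ ⟨j + (x : ℕ), by have := x.2; omega⟩ with hg
    have hg1 : ∀ x, g x ∈ sᶜ := by
      intro x
      rw [Finset.mem_compl, hsdef]
      intro hmem'
      obtain ⟨y, _, hy⟩ := Finset.mem_image.mp hmem'
      have := σ.injective hy
      have : (y : ℕ) = j + (x : ℕ) := by simpa [Fin.ext_iff] using this
      have := y.2
      omega
    have hstep : ∀ p : ℕ, ∀ hp : j + p + 1 < m,
        σ ⟨j + p, by omega⟩ < σ ⟨j + p + 1, hp⟩ := by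
      intro p hp
      have hne : j + p + 1 ≠ j := by omega
      have := hσ (j + p) hp hne
      have hnd : ¬ (σ ⟨j + p + 1, hp⟩ < σ ⟨j + p, by omega⟩) := by
        rw [this]; rintro ⟨_, hlt⟩; omega
      have hne2 : σ ⟨j + p, by omega⟩ ≠ σ ⟨j + p + 1, hp⟩ :=
        fun hc => by have := σ.injective hc; simp [Fin.ext_iff] at this
      exact lt_of_le_of_ne (not_lt.mp hnd) hne2
    have hmono : ∀ q : ℕ, ∀ hq : j + q < m, ∀ p : ℕ, ∀ hpq : p < q,
        σ ⟨j + p, by omega⟩ < σ ⟨j + q, hq⟩ := by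
      intro q
      induction q with
      | zero => intro hq p hp; omega
      | succ q ih =>
        intro hq p hp
        rcases Nat.lt_or_ge p q with h' | h'
        · exact lt_trans (ih (by omega) p h') (hstep q hq)
        · have : p = q := by omega
          subst this
          exact hstep p hq
    have hgmono : StrictMono g := by
      intro a b hab
      have := hmono (b : ℕ) (by have := b.2; omega) (a : ℕ) hab
      exact this
    have := Finset.orderEmbOfFin_unique (card_compl_eq s hs) hg1 hgmono
    have heq := congrFun this ⟨(i : ℕ) - j, by have := i.2; omega⟩
    have hfin : (⟨j + ((i : ℕ) - j), by have := i.2; omega⟩ : Fin m) = i := by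
      refine Fin.ext ?_
      show j + ((i : ℕ) - j) = (i : ℕ)
      omega
    rw [← heq]
    exact congrArg (fun z => ((σ z : Fin m) : ℕ)) hfin


theorem card_PP (d j m : ℕ) (hjm : j ≤ m) :
    Nat.card {σ : Equiv.Perm (Fin m) // PP d j m σ} = m.choose j * altCount d j := by
  classical
  have hbij : Function.Bijective
      (fun p : {s : Finset (Fin m) // s.card = j} ×
          {τ : Equiv.Perm (Fin j) // IsDAlternating d τ} =>
        (⟨bPerm p.1.1 p.1.2 p.2.1, bPerm_PP p.1.1 p.1.2 p.2.1 p.2.2⟩ :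
          {σ : Equiv.Perm (Fin m) // PP d j m σ})) := by
    constructor
    · rintro ⟨⟨s, hs⟩, ⟨τ, hτ⟩⟩ ⟨⟨s', hs'⟩, ⟨τ', hτ'⟩⟩ hpq
      have h1 : bPerm s hs τ = bPerm s' hs' τ' := congrArg Subtype.val hpq
      obtain ⟨hss, hττ⟩ := bPerm_pair_inj s s' hs hs' τ τ' hjm h1
      subst hss
      have : τ = τ' := eq_of_heq hττ
      subst this
      rfl
    · rintro ⟨σ, hσ⟩
      obtain ⟨s, hs, τ, halt, hb⟩ := bPerm_surj hjm σ hσ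
      exact ⟨⟨⟨s, hs⟩, ⟨τ, halt⟩⟩, Subtype.ext hb⟩
  rw [← Nat.card_eq_of_bijective _ hbij, Nat.card_prod, altCount]
  congr 1
  rw [Nat.card_eq_fintype_card, Fintype.card_finset_len, Fintype.card_fin]

/-- split a subtype over a disjoint disjunction -/
def sumSplit {α : Type*} (p q : α → Prop) [DecidablePred p] (hpq : ∀ a, p a → q a → False) :
    {a // p a ∨ q a} ≃ {a // p a} ⊕ {a // q a} where
  toFun a := if h : p a.1 then Sum.inl ⟨a.1, h⟩ else Sum.inr ⟨a.1, a.2.resolve_left h⟩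
  invFun := Sum.elim (fun x => ⟨x.1, Or.inl x.2⟩) (fun x => ⟨x.1, Or.inr x.2⟩)
  left_inv a := by by_cases h : p a.1 <;> simp [h]
  right_inv x := by
    rcases x with x | x
    · simp [x.2]
    · have : ¬ p x.1 := fun hc => hpq x.1 hc x.2
      simp [this]

lemma PP_zero_iff (d m : ℕ) (σ : Equiv.Perm (Fin m)) : PP d 0 m σ ↔ RR d 0 m σ := by
  constructor
  · intro hσ i h
    rw [hσ i h (by omega)]
    omega
  · intro hσ i h _
    rw [hσ i h]
    omega

lemma PP_top_iff (d m : ℕ) (σ : Equiv.Perm (Fin m)) : PP d m m σ ↔ IsDAlternating d σ := by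
  constructor
  · intro hσ i h
    rw [hσ i h (by omega)]
    exact ⟨fun ⟨h1, _⟩ => h1, fun h1 => ⟨h1, h⟩⟩
  · intro hσ i h _
    rw [hσ i h]
    exact ⟨fun h1 => ⟨h1, h⟩, fun ⟨h1, _⟩ => h1⟩

lemma alt_iff_RR (d n : ℕ) (hd : 0 < d) (hn : 0 < n) (σ : Equiv.Perm (Fin (d * n))) :
    IsDAlternating d σ ↔ RR d (n - 1) (d * n) σ := by
  have key : ∀ i : ℕ, i + 1 < d * n → (d ∣ (i + 1) → i + 1 ≤ d * (n - 1)) := by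
    intro i h hdvd
    obtain ⟨c, hc⟩ := hdvd
    have : c ≤ n - 1 := by
      rcases Nat.lt_or_ge c n with h' | h'
      · omega
      · exfalso; nlinarith [Nat.mul_le_mul_left d h']
    calc i + 1 = d * c := hc
    _ ≤ d * (n - 1) := Nat.mul_le_mul_left d this
  constructor
  · intro hσ i h
    rw [hσ i h]
    exact ⟨fun h1 => ⟨h1, key i h h1⟩, fun ⟨h1, _⟩ => h1⟩
  · intro hσ i h
    rw [hσ i h]
    exact ⟨fun ⟨h1, _⟩ => h1, fun h1 => ⟨h1, key i h h1⟩⟩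

lemma mul_pred_lt (d r : ℕ) (hd : 0 < d) (hr : 1 ≤ r) : d * (r - 1) < d * r := by
  have : d * (r - 1) + d = d * r := by
    rw [← Nat.mul_succ]
    congr 1
    omega
  omega

lemma PP_decomp (d r m : ℕ) (hd : 0 < d) (hr : 1 ≤ r) (hrm : d * r < m)
    (σ : Equiv.Perm (Fin m)) :
    PP d (d * r) m σ ↔ (RR d r m σ ∨ RR d (r - 1) m σ) := by
  have hdr0 : 0 < d * r := Nat.mul_pos hd hr
  have h3 := mul_pred_lt d r hd hr
  have hmul : ∀ i : ℕ, d ∣ (i + 1) → (i + 1 < d * r ↔ i + 1 ≤ d * (r - 1)) := by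
    intro i hdvd
    obtain ⟨c, hc⟩ := hdvd
    constructor
    · intro h'
      have : c ≤ r - 1 := by
        rcases Nat.lt_or_ge c r with h'' | h''
        · omega
        · exfalso; nlinarith [Nat.mul_le_mul_left d h'']
      calc i + 1 = d * c := hc
      _ ≤ d * (r - 1) := Nat.mul_le_mul_left d this
    · intro h'
      omega
  constructor
  · intro hσ
    by_cases hdes : σ ⟨d * r, hrm⟩ < σ ⟨d * r - 1, by omega⟩
    · left
      intro i h
      by_cases hi : i + 1 = d * r
      · have hfin1 : (⟨i + 1, h⟩ : Fin m) = ⟨d * r, hrm⟩ := Fin.ext (show i + 1 = d * r by omega)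
        have hfin2 : (⟨i, by omega⟩ : Fin m) = ⟨d * r - 1, by omega⟩ :=
          Fin.ext (show i = d * r - 1 by omega)
        rw [hfin1, hfin2]
        exact ⟨fun _ => ⟨⟨r, by omega⟩, by omega⟩, fun _ => hdes⟩
      · rw [hσ i h hi]
        exact ⟨fun ⟨h1, h2⟩ => ⟨h1, by omega⟩, fun ⟨h1, h2⟩ => ⟨h1, by omega⟩⟩
    · right
      intro i h
      by_cases hi : i + 1 = d * r
      · have hfin1 : (⟨i + 1, h⟩ : Fin m) = ⟨d * r, hrm⟩ := Fin.ext (show i + 1 = d * r by omega)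
        have hfin2 : (⟨i, by omega⟩ : Fin m) = ⟨d * r - 1, by omega⟩ :=
          Fin.ext (show i = d * r - 1 by omega)
        rw [hfin1, hfin2]
        exact ⟨fun hc => absurd hc hdes, fun ⟨h1, h2⟩ => by omega⟩
      · rw [hσ i h hi]
        constructor
        · rintro ⟨h1, h2⟩
          exact ⟨h1, (hmul i h1).mp (by omega)⟩
        · rintro ⟨h1, h2⟩
          exact ⟨h1, by have := (hmul i h1).mpr h2; omega⟩
  · rintro (hσ | hσ) <;> intro i h hi <;> rw [hσ i h]
    · constructor
      · rintro ⟨h1, h2⟩; exact ⟨h1, by omega⟩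
      · rintro ⟨h1, h2⟩; exact ⟨h1, by omega⟩
    · constructor
      · rintro ⟨h1, h2⟩
        exact ⟨h1, by have := (hmul i h1).mpr h2; omega⟩
      · rintro ⟨h1, h2⟩
        exact ⟨h1, (hmul i h1).mp h2⟩

lemma RR_not_both (d r m : ℕ) (hd : 0 < d) (hr : 1 ≤ r) (hrm : d * r < m)
    (σ : Equiv.Perm (Fin m)) (h1 : RR d r m σ) (h2 : RR d (r - 1) m σ) : False := by
  have hdr0 : 0 < d * r := Nat.mul_pos hd hr
  have h3 := mul_pred_lt d r hd hr
  have e1 := h1 (d * r - 1) (by omega)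
  have e2 := h2 (d * r - 1) (by omega)
  have hdvd : d ∣ (d * r - 1 + 1) := by
    have : d * r - 1 + 1 = d * r := by omega
    rw [this]
    exact ⟨r, rfl⟩
  have hdes := e1.mpr ⟨hdvd, by omega⟩
  have := (e2.mp hdes).2
  omega

lemma card_PP_split (d r m : ℕ) (hd : 0 < d) (hr : 1 ≤ r) (hrm : d * r < m) :
    Nat.card {σ : Equiv.Perm (Fin m) // PP d (d * r) m σ} =
      Nat.card {σ : Equiv.Perm (Fin m) // RR d r m σ} +
        Nat.card {σ : Equiv.Perm (Fin m) // RR d (r - 1) m σ} := by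
  classical
  rw [Nat.card_congr ((Equiv.subtypeEquivRight (PP_decomp d r m hd hr hrm)).trans
    (sumSplit _ _ (RR_not_both d r m hd hr hrm))), Nat.card_sum]


lemma alt_sum_aux (t p : ℕ → ℚ) :
    ∀ n : ℕ, p 0 = t 0 → (∀ r, 1 ≤ r → r ≤ n → p r = t r + t (r - 1)) →
      ∑ r ∈ Finset.range (n + 1), (-1 : ℚ) ^ r * p r = (-1) ^ n * t n := by
  intro n
  induction n with
  | zero => intro h0 _; simp [h0]
  | succ n ih =>
    intro h0 hrec
    rw [Finset.sum_range_succ, ih h0 (fun r h1 h2 => hrec r h1 (by omega)),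
      hrec (n + 1) (by omega) le_rfl]
    have he : (n + 1) - 1 = n := by omega
    rw [he, pow_succ]
    ring

lemma key_rec (d n : ℕ) (hd : 0 < d) (hn : 1 ≤ n) :
    ∑ r ∈ Finset.range (n + 1), (-1 : ℚ) ^ r *
      (((d * n).choose (d * r) : ℚ) * (altCount d (d * r) : ℚ)) = 0 := by
  set t : ℕ → ℚ :=
    fun r => (Nat.card {σ : Equiv.Perm (Fin (d * n)) // RR d r (d * n) σ} : ℚ) with ht
  set p : ℕ → ℚ :=
    fun r => (Nat.card {σ : Equiv.Perm (Fin (d * n)) // PP d (d * r) (d * n) σ} : ℚ) with hp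
  have hterm : ∀ r, r ≤ n → ((d * n).choose (d * r) : ℚ) * (altCount d (d * r) : ℚ) = p r := by
    intro r hr
    rw [hp]
    simp only []
    rw [card_PP d (d * r) (d * n) (Nat.mul_le_mul_left d hr)]
    push_cast
    ring
  obtain ⟨n', rfl⟩ : ∃ n', n = n' + 1 := ⟨n - 1, by omega⟩
  rw [Finset.sum_range_succ]
  have hsum : ∑ r ∈ Finset.range (n' + 1), (-1 : ℚ) ^ r *
      (((d * (n' + 1)).choose (d * r) : ℚ) * (altCount d (d * r) : ℚ)) =
      ∑ r ∈ Finset.range (n' + 1), (-1 : ℚ) ^ r * p r := by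
    refine Finset.sum_congr rfl fun r hr => ?_
    rw [hterm r (by have := Finset.mem_range.mp hr; omega)]
  rw [hsum, hterm (n' + 1) le_rfl]
  have h0 : p 0 = t 0 := by
    rw [hp, ht]
    simp only [Nat.mul_zero]
    congr 1
    exact Nat.card_congr (Equiv.subtypeEquivRight (PP_zero_iff d (d * (n' + 1))))
  have hrec : ∀ r, 1 ≤ r → r ≤ n' → p r = t r + t (r - 1) := by
    intro r h1 h2
    rw [hp, ht]
    simp only []
    have hlt : d * r < d * (n' + 1) := by
      have h4 := mul_pred_lt d (n' + 1) hd (by omega)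
      have h5 : d * r ≤ d * (n' + 1 - 1) := Nat.mul_le_mul_left d (by omega)
      omega
    rw [card_PP_split d r (d * (n' + 1)) hd h1 hlt]
    push_cast
    ring
  have hlast : p (n' + 1) = t n' := by
    rw [hp, ht]
    simp only []
    congr 1
    apply Nat.card_congr
    apply Equiv.subtypeEquivRight
    intro σ
    have h1 := PP_top_iff d (d * (n' + 1)) σ
    have h2 := alt_iff_RR d (n' + 1) hd (by omega) σ
    rw [Nat.add_sub_cancel] at h2
    exact h1.trans h2
  rw [alt_sum_aux t p n' h0 hrec, hlast, pow_succ]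
  ring


noncomputable def Fser (d : ℕ) : PowerSeries ℚ :=
  PowerSeries.mk fun k => if d ∣ k then (1 : ℚ) / k.factorial else 0

noncomputable def Gser (d : ℕ) : PowerSeries ℚ :=
  PowerSeries.mk fun k =>
    if d ∣ k then (-1 : ℚ) ^ (k / d) * (altCount d k : ℚ) / k.factorial else 0

lemma altCount_zero (d : ℕ) : altCount d 0 = 1 := by
  rw [altCount]
  have h : ∀ σ : Equiv.Perm (Fin 0), IsDAlternating d σ := fun σ i hi => by omega
  rw [Nat.card_congr (Equiv.subtypeUnivEquiv h), Nat.card_eq_fintype_card]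
  simp

lemma mul_GF (d : ℕ) (hd : 2 ≤ d) : Gser d * Fser d = 1 := by
  have hd0 : 0 < d := by omega
  ext k
  rw [PowerSeries.coeff_mul, PowerSeries.coeff_one]
  rcases Nat.eq_zero_or_pos k with rfl | hk
  · simp [Finset.Nat.antidiagonal_zero, Gser, Fser, altCount_zero]
  · rw [if_neg (by omega)]
    by_cases hdk : d ∣ k
    · obtain ⟨n, rfl⟩ := hdk
      have hn : 1 ≤ n := by
        rcases Nat.eq_zero_or_pos n with rfl | h
        · simp at hk
        · exact h
      rw [Finset.Nat.sum_antidiagonal_eq_sum_range_succ_mk]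
      have hsub : Finset.image (fun i => d * i) (Finset.range (n + 1)) ⊆
          Finset.range (d * n + 1) := by
        intro q hq
        obtain ⟨i, hi, rfl⟩ := Finset.mem_image.mp hq
        have := Finset.mem_range.mp hi
        have : d * i ≤ d * n := Nat.mul_le_mul_left d (by omega)
        exact Finset.mem_range.mpr (by omega)
      rw [← Finset.sum_subset hsub ?zero]
      case zero =>
        intro q hq hqn
        have hq' := Finset.mem_range.mp hq
        have : ¬ d ∣ q := by
          rintro ⟨i, rfl⟩
          apply hqn
          refine Finset.mem_image.mpr ⟨i, Finset.mem_range.mpr ?_, rfl⟩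
          by_contra hc
          push_neg at hc
          have := Nat.mul_le_mul_left d (by omega : n + 1 ≤ i)
          have hx : d * (n + 1) = d * n + d := by ring
          omega
        rw [Gser, PowerSeries.coeff_mk, if_neg this, zero_mul]
      rw [Finset.sum_image (fun a _ b _ hab => Nat.eq_of_mul_eq_mul_left hd0 hab)]
      have hterm : ∀ i ∈ Finset.range (n + 1),
          (PowerSeries.coeff (R := ℚ) (d * i)) (Gser d) *
            (PowerSeries.coeff (R := ℚ) (d * n - d * i)) (Fser d) =
          (1 / ((d * n).factorial : ℚ)) *
            ((-1 : ℚ) ^ i * (((d * n).choose (d * i) : ℚ) * (altCount d (d * i) : ℚ))) := by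
        intro i hi
        have hin : i ≤ n := by have := Finset.mem_range.mp hi; omega
        have hsub2 : d * n - d * i = d * (n - i) := by
          rw [Nat.mul_sub]
        have hle : d * i ≤ d * n := Nat.mul_le_mul_left d hin
        rw [Gser, Fser, PowerSeries.coeff_mk, PowerSeries.coeff_mk,
          if_pos ⟨i, rfl⟩, hsub2, if_pos ⟨n - i, rfl⟩,
          Nat.mul_div_cancel_left i hd0]
        have hfact := Nat.choose_mul_factorial_mul_factorial hle
        have h1 : ((d * i).factorial : ℚ) ≠ 0 := Nat.cast_ne_zero.mpr (Nat.factorial_ne_zero _)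
        have h2 : ((d * (n - i)).factorial : ℚ) ≠ 0 :=
          Nat.cast_ne_zero.mpr (Nat.factorial_ne_zero _)
        have h3 : (((d * n)).factorial : ℚ) ≠ 0 := Nat.cast_ne_zero.mpr (Nat.factorial_ne_zero _)
        have hfq : (((d * n).choose (d * i) : ℚ)) * ((d * i).factorial : ℚ) *
            ((d * (n - i)).factorial : ℚ) = ((d * n).factorial : ℚ) := by
          rw [← hsub2]
          exact_mod_cast congrArg (Nat.cast : ℕ → ℚ) hfact
        field_simp
        rw [← hfq]
        ring
      rw [Finset.sum_congr rfl hterm, ← Finset.mul_sum, key_rec d n hd0 hn, mul_zero]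
    · apply Finset.sum_eq_zero
      intro p hp
      have hpk := Finset.HasAntidiagonal.mem_antidiagonal.mp hp
      by_cases h1 : d ∣ p.1
      · have h2 : ¬ d ∣ p.2 := fun hc => hdk (hpk ▸ Nat.dvd_add h1 hc)
        rw [Fser, PowerSeries.coeff_mk, if_neg h2, mul_zero]
      · rw [Gser, PowerSeries.coeff_mk, if_neg h1, zero_mul]


lemma Finv (d : ℕ) (hd : 2 ≤ d) : (Fser d)⁻¹ = Gser d := by
  have h0 : PowerSeries.constantCoeff (Fser d) ≠ 0 := by
    rw [Fser]
    simp
  exact ((PowerSeries.eq_inv_iff_mul_eq_one h0).mpr (mul_GF d hd)).symm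

end Stmt9

theorem stmt_9 (d n : ℕ) (hd : 2 ≤ d) :
    genEulerQ d (d * n) =
      (-1 : ℚ) ^ n *
        (Nat.card {σ : Equiv.Perm (Fin (d * n)) // IsDAlternating d σ} : ℚ) := by
  have hfeq : (PowerSeries.mk fun m => if d ∣ m then (1 : ℚ) / m.factorial else 0) =
      Stmt9.Fser d := rfl
  rw [genEulerQ, hfeq, Stmt9.Finv d hd, Stmt9.Gser, PowerSeries.coeff_mk,
    if_pos ⟨n, rfl⟩, Nat.mul_div_cancel_left n (by omega : 0 < d)]
  have h3 : (((d * n).factorial : ℚ)) ≠ 0 := Nat.cast_ne_zero.mpr (Nat.factorial_ne_zero _)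
  rw [Stmt9.altCount]
  field_simp
end

section
/- For all integers d ≥ 2 and n ≥ 0, the generalized Euler number satisfies the congruence ℰ_{dn}^{(d)} ≡ 1 (mod 2). -/
open PowerSeries Finset

/-- The base series `∑ x^{dk}/(dk)!`. -/
noncomputable def eulerF (d : ℕ) : PowerSeries ℚ :=
  PowerSeries.mk fun m => if d ∣ m then (1 : ℚ) / m.factorial else 0

lemma eulerF_coeff (d m : ℕ) :
    PowerSeries.coeff (R := ℚ) m (eulerF d) = if d ∣ m then (1 : ℚ) / m.factorial else 0 :=
  PowerSeries.coeff_mk _ _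

lemma eulerF_const (d : ℕ) : PowerSeries.constantCoeff (R := ℚ) (eulerF d) = 1 := by
  have := eulerF_coeff d 0
  rw [PowerSeries.coeff_zero_eq_constantCoeff_apply] at this
  simp at this
  simp [this]

lemma eulerF_mul_inv (d : ℕ) : eulerF d * (eulerF d)⁻¹ = 1 :=
  PowerSeries.mul_inv_cancel _ (by rw [eulerF_const]; norm_num)

/-- Coefficients at indices not divisible by `d` vanish. -/
lemma eulerInv_vanish (d : ℕ) (hd : 2 ≤ d) :
    ∀ m, ¬ d ∣ m → PowerSeries.coeff (R := ℚ) m (eulerF d)⁻¹ = 0 := by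
  intro m
  induction m using Nat.strong_induction_on with
  | _ m ih =>
  intro hm
  have hm0 : m ≠ 0 := by rintro rfl; exact hm (dvd_zero d)
  have h1 : PowerSeries.coeff (R := ℚ) m (eulerF d * (eulerF d)⁻¹) = 0 := by
    rw [eulerF_mul_inv, PowerSeries.coeff_one, if_neg hm0]
  rw [PowerSeries.coeff_mul] at h1
  rw [Finset.sum_eq_single (0, m)] at h1
  · rw [eulerF_coeff] at h1
    simpa using h1
  · rintro ⟨i, j⟩ hb hne
    have hij : i + j = m := Finset.HasAntidiagonal.mem_antidiagonal.mp hb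
    have hi0 : i ≠ 0 := by
      rintro rfl
      simp at hij
      exact hne (by simp [hij])
    by_cases hdi : d ∣ i
    · have hdj : ¬ d ∣ j := fun h => hm (hij ▸ dvd_add hdi h)
      have hjm : j < m := by omega
      rw [ih j hjm hdj, mul_zero]
    · rw [eulerF_coeff, if_neg hdi, zero_mul]
  · intro h
    exact absurd (Finset.HasAntidiagonal.mem_antidiagonal.mpr (by simp)) h

/-- The key recursion. -/
lemma euler_recursion (d n : ℕ) (hd : 2 ≤ d) (hn : 1 ≤ n) :
    ∑ k ∈ Finset.range (n + 1),
      (((d * n).choose (d * k) : ℚ)) * genEulerQ d (d * k) = 0 := by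
  have hd0 : 0 < d := by omega
  have hdn0 : d * n ≠ 0 := by positivity
  have h1 : PowerSeries.coeff (R := ℚ) (d * n) (eulerF d * (eulerF d)⁻¹) = 0 := by
    rw [eulerF_mul_inv, PowerSeries.coeff_one, if_neg hdn0]
  rw [PowerSeries.coeff_mul] at h1
  set G := (eulerF d)⁻¹ with hG
  set f : ℕ × ℕ → ℚ := fun p => PowerSeries.coeff (R := ℚ) p.1 (eulerF d) * PowerSeries.coeff (R := ℚ) p.2 G
    with hf
  set e : ℕ → ℕ × ℕ := fun k => (d * (n - k), d * k) with he
  have himg : (Finset.range (n + 1)).image e ⊆ Finset.HasAntidiagonal.antidiagonal (d * n) := by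
    intro p hp
    obtain ⟨k, hk, rfl⟩ := Finset.mem_image.mp hp
    have hk' : k ≤ n := by simpa [Nat.lt_succ_iff] using hk
    rw [Finset.HasAntidiagonal.mem_antidiagonal]
    show d * (n - k) + d * k = d * n
    rw [← Nat.mul_add, Nat.sub_add_cancel hk']
  have hsum : ∑ p ∈ Finset.HasAntidiagonal.antidiagonal (d * n), f p
      = ∑ p ∈ (Finset.range (n + 1)).image e, f p := by
    refine (Finset.sum_subset himg ?_).symm
    rintro ⟨i, j⟩ hp hnp
    have hij : i + j = d * n := Finset.HasAntidiagonal.mem_antidiagonal.mp hp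
    by_cases hdj : d ∣ j
    · obtain ⟨k, rfl⟩ := hdj
      exfalso
      apply hnp
      have hk : k ≤ n := Nat.le_of_mul_le_mul_left (by omega) hd0
      have hi : i = d * (n - k) := by rw [Nat.mul_sub]; omega
      refine Finset.mem_image.mpr ⟨k, Finset.mem_range.mpr (by omega), ?_⟩
      simp [he, hi]
    · show PowerSeries.coeff (R := ℚ) i (eulerF d) * PowerSeries.coeff (R := ℚ) j G = 0
      rw [eulerInv_vanish d hd j hdj, mul_zero]
  have hinj : ∀ a ∈ Finset.range (n+1), ∀ b ∈ Finset.range (n+1), e a = e b → a = b := by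
    intro a _ b _ hab
    have : d * a = d * b := congrArg Prod.snd hab
    exact Nat.eq_of_mul_eq_mul_left hd0 this
  rw [hsum, Finset.sum_image hinj] at h1
  -- now h1 : ∑ k in range (n+1), coeff (d*(n-k)) F * coeff (d*k) G = 0
  have key : ∀ k ∈ Finset.range (n + 1),
      (((d * n).choose (d * k) : ℚ)) * genEulerQ d (d * k)
        = ((d * n).factorial : ℚ) * (f (e k)) := by
    intro k hk
    have hk' : k ≤ n := by simpa [Nat.lt_succ_iff] using hk
    have hle : d * k ≤ d * n := Nat.mul_le_mul_left d hk'
    have hfac : ((d * n).choose (d * k) : ℚ) * (d * k).factorial * (d * (n - k)).factorial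
        = ((d * n).factorial : ℚ) := by
      rw [Nat.mul_sub]
      exact_mod_cast congrArg (Nat.cast (R := ℚ))
        (Nat.choose_mul_factorial_mul_factorial hle)
    show _ = ((d * n).factorial : ℚ) *
      (PowerSeries.coeff (R := ℚ) (d * (n - k)) (eulerF d) * PowerSeries.coeff (R := ℚ) (d * k) G)
    rw [eulerF_coeff, if_pos (Dvd.intro _ rfl)]
    have hgen : genEulerQ d (d * k) = ((d * k).factorial : ℚ) * PowerSeries.coeff (R := ℚ) (d * k) G :=
      rfl
    rw [hgen, ← hfac]
    have h2 : ((d * (n - k)).factorial : ℚ) ≠ 0 := by positivity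
    field_simp
  rw [Finset.sum_congr rfl key, ← Finset.mul_sum, h1, mul_zero]

lemma central_even (m : ℕ) (hm : 1 ≤ m) : 2 ∣ (2 * m).choose m := by
  have := Nat.two_dvd_centralBinom_of_one_le (n := m) hm
  rwa [Nat.centralBinom_eq_two_mul_choose] at this

/-- The parity of the binomial sum. -/
lemma parity_sum (d n : ℕ) (hd : 2 ≤ d) (hn : 1 ≤ n) :
    ∑ k ∈ Finset.range (n + 1), (((d * n).choose (d * k) : ZMod 2)) = 0 := by
  set f : ℕ → ZMod 2 := fun k => ((d * n).choose (d * k) : ZMod 2) with hf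
  have hsymm : ∀ k, k ≤ n → f (n - k) = f k := by
    intro k hk
    have hle : d * k ≤ d * n := Nat.mul_le_mul_left d hk
    simp only [hf]
    rw [Nat.mul_sub, Nat.choose_symm hle]
  refine Finset.sum_involution (fun k _ => n - k) ?_ ?_ ?_ ?_
  · intro k hk
    have hk' : k ≤ n := by simpa [Nat.lt_succ_iff] using hk
    show f k + f (n - k) = 0
    rw [hsymm k hk', CharTwo.add_self_eq_zero]
  · intro k hk hfk
    show n - k ≠ k
    intro hkk
    have hk' : k ≤ n := by simpa [Nat.lt_succ_iff] using hk
    have h2k : n = 2 * k := by omega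
    have hk1 : 1 ≤ k := by omega
    apply hfk
    show f k = 0
    have hdn : d * n = 2 * (d * k) := by rw [h2k]; ring
    rw [hf]
    simp only [hdn]
    rw [ZMod.natCast_eq_zero_iff]
    exact central_even (d * k) (Nat.mul_pos (by omega) hk1)
  · intro k hk
    show n - k ∈ Finset.range (n + 1)
    exact Finset.mem_range.mpr (by omega)
  · intro k hk
    have hk' : k ≤ n := by simpa [Nat.lt_succ_iff] using hk
    show n - (n - k) = k
    omega

theorem stmt_10 (d n : ℕ) (hd : 2 ≤ d) :
    ∃ z : ℤ, genEulerQ d (d * n) = (z : ℚ) ∧ z ≡ 1 [ZMOD 2] := by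
  induction n using Nat.strong_induction_on with
  | _ n ih =>
  rcases Nat.eq_zero_or_pos n with rfl | hn
  · refine ⟨1, ?_, Int.ModEq.refl 1⟩
    rw [genEulerQ]
    simp only [Nat.mul_zero, Nat.factorial_zero, Nat.cast_one, one_mul]
    rw [PowerSeries.coeff_zero_eq_constantCoeff_apply]
    rw [show (PowerSeries.mk fun m => if d ∣ m then (1 : ℚ) / m.factorial else 0) = eulerF d
      from rfl]
    rw [PowerSeries.constantCoeff_inv, eulerF_const, inv_one, Int.cast_one]
  · -- choose integers for smaller indices
    have hrec := euler_recursion d n hd hn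
    rw [Finset.sum_range_succ, Nat.choose_self, Nat.cast_one, one_mul] at hrec
    set w : ℕ → ℤ := fun k => if h : k < n then (ih k h).choose else 0 with hw
    have hwspec : ∀ k, (hk : k < n) →
        genEulerQ d (d * k) = ((w k : ℤ) : ℚ) ∧ w k ≡ 1 [ZMOD 2] := by
      intro k hk
      have := (ih k hk).choose_spec
      simpa [hw, dif_pos hk] using this
    refine ⟨-∑ k ∈ Finset.range n, ((d * n).choose (d * k) : ℤ) * w k, ?_, ?_⟩
    · have : genEulerQ d (d * n) = -∑ k ∈ Finset.range n,
          (((d * n).choose (d * k) : ℚ)) * genEulerQ d (d * k) := by linarith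
      rw [this]
      push_cast
      congr 1
      refine Finset.sum_congr rfl fun k hk => ?_
      rw [(hwspec k (Finset.mem_range.mp hk)).1]
    · have h2' : ((2 : ℕ) : ℤ) = 2 := by norm_num
      rw [← h2', ← ZMod.intCast_eq_intCast_iff]
      push_cast
      have h2 : ∀ k ∈ Finset.range n,
          ((((d * n).choose (d * k) : ℕ) : ZMod 2)) * ((w k : ZMod 2))
            = (((d * n).choose (d * k) : ℕ) : ZMod 2) := by
        intro k hk
        have := (hwspec k (Finset.mem_range.mp hk)).2
        rw [← h2', ← ZMod.intCast_eq_intCast_iff] at this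
        push_cast at this
        rw [this, mul_one]
      rw [Finset.sum_congr rfl h2]
      have hpar := parity_sum d n hd hn
      rw [Finset.sum_range_succ, Nat.choose_self, Nat.cast_one] at hpar
      have : ∑ k ∈ Finset.range n, (((d * n).choose (d * k) : ZMod 2)) = -1 := by
        linear_combination hpar
      rw [this]
      decide
end

section
/- For every odd prime p (i.e., a prime p ≥ 3) and every integer n ≥ 0, the generalized Euler number satisfies the congruence ℰ_{pn}^{(p)} ≡ (-1)^n (mod 2p²). -/
open Finset PowerSeries

/-- Lucas consequence: if `p ∤ m` then `p ∣ C(p*n, m)`. -/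
lemma dvd_choose_of_not_dvd (p n m : ℕ) (hp : p.Prime) (hm : ¬ p ∣ m) :
    p ∣ (p * n).choose m := by
  haveI : Fact p.Prime := ⟨hp⟩
  have h := @Choose.choose_modEq_choose_mod_mul_choose_div_nat (p * n) m p _
  have h0 : (p * n) % p = 0 := Nat.mul_mod_right p n
  have hm0 : m % p ≠ 0 := fun h' => hm (Nat.dvd_of_mod_eq_zero h')
  rw [h0, Nat.choose_eq_zero_of_lt (Nat.pos_of_ne_zero hm0), zero_mul] at h
  exact (Nat.modEq_zero_iff_dvd).mp h

/-- Key: `C(p*n, p*k) ≡ C(n,k) mod p²`. -/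
lemma choose_mul_modeq (p : ℕ) (hp : p.Prime) :
    ∀ n k : ℕ, ((p * n).choose (p * k) : ZMod (p ^ 2)) = ((n.choose k : ℕ) : ZMod (p ^ 2)) := by
  intro n
  induction n with
  | zero =>
    intro k
    rcases Nat.eq_zero_or_pos k with rfl | hk
    · simp
    · rw [Nat.mul_zero, Nat.choose_eq_zero_of_lt (Nat.mul_pos hp.pos hk),
        Nat.choose_eq_zero_of_lt hk]
  | succ n ih =>
    intro k
    rcases Nat.eq_zero_or_pos k with rfl | hk
    · simp
    obtain ⟨k', rfl⟩ : ∃ k', k = k' + 1 := ⟨k - 1, by omega⟩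
    set K := p * (k' + 1) with hK
    have hKp : p ≤ K := Nat.le_mul_of_pos_right p hk
    have hKsub : K - p = p * k' := by rw [hK, Nat.mul_add, Nat.mul_one, Nat.add_sub_cancel]
    have hvdm : (p * (n + 1)).choose K
        = ∑ j ∈ range (K + 1), (p * n).choose j * p.choose (K - j) := by
      have h1 : p * (n + 1) = p * n + p := by ring
      rw [h1, Nat.add_choose_eq, Finset.Nat.sum_antidiagonal_eq_sum_range_succ_mk]
    have key : (∑ j ∈ range (K + 1), (((p * n).choose j * p.choose (K - j) : ℕ) : ZMod (p^2)))
        = (((p * n).choose (K - p) * p.choose p : ℕ) : ZMod (p^2))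
          + (((p * n).choose K * p.choose 0 : ℕ) : ZMod (p^2)) := by
      rw [Finset.sum_eq_add_of_mem (K - p) K (by simp [Nat.lt_succ_iff, Nat.sub_le])
        (by simp) (by have := hp.pos; omega) ?_]
      · rw [Nat.sub_sub_self hKp, Nat.sub_self]
      intro j hj ⟨hj1, hj2⟩
      have hjK : j ≤ K := Nat.lt_succ_iff.mp (Finset.mem_range.mp hj)
      set b := K - j with hb
      rcases lt_or_ge p b with hlt | hle
      · rw [Nat.choose_eq_zero_of_lt hlt, Nat.mul_zero, Nat.cast_zero]
      have hbp : b < p := lt_of_le_of_ne hle (fun h => hj1 (by omega))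
      have hb0 : b ≠ 0 := fun h => hj2 (by omega)
      have h1 : p ∣ p.choose b := hp.dvd_choose_self hb0 hbp
      have h2 : p ∣ (p * n).choose j := by
        apply dvd_choose_of_not_dvd p n _ hp
        intro hdvd
        have hdb : p ∣ b := by
          have := Nat.dvd_sub (Dvd.intro (k' + 1) rfl) hdvd
          rwa [hb]
        exact Nat.not_dvd_of_pos_of_lt (Nat.pos_of_ne_zero hb0) hbp hdb
      obtain ⟨a, ha⟩ := h2
      obtain ⟨c, hc⟩ := h1
      rw [ha, hc]
      push_cast
      have : ((p : ZMod (p^2)) * a) * ((p : ZMod (p^2)) * c) = ((p^2 : ℕ) : ZMod (p^2)) * (a * c) := by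
        push_cast; ring
      rw [this, ZMod.natCast_self, zero_mul]
    calc ((p * (n + 1)).choose K : ZMod (p^2))
        = ∑ j ∈ range (K + 1), (((p * n).choose j * p.choose (K - j) : ℕ) : ZMod (p^2)) := by
          rw [hvdm]; push_cast [Nat.cast_sum]; rfl
      _ = (((p * n).choose (K - p) * p.choose p : ℕ) : ZMod (p^2))
          + (((p * n).choose K * p.choose 0 : ℕ) : ZMod (p^2)) := key
      _ = ((n.choose k' : ℕ) : ZMod (p^2)) + ((n.choose (k' + 1) : ℕ) : ZMod (p^2)) := by
          rw [hKsub]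
          push_cast [Nat.choose_self, Nat.choose_zero_right]
          rw [ih, ih]; push_cast; ring
      _ = (((n + 1).choose (k' + 1) : ℕ) : ZMod (p^2)) := by
          rw [Nat.choose_succ_succ]; push_cast; ring



/-- central binomial coefficient is even -/
lemma two_dvd_central (j : ℕ) (hj : 1 ≤ j) : 2 ∣ (2 * j).choose j := by
  obtain ⟨j', rfl⟩ : ∃ j', j = j' + 1 := ⟨j - 1, by omega⟩
  have h1 : 2 * (j' + 1) = (2 * j' + 1) + 1 := by ring
  rw [h1, Nat.choose_succ_succ]
  have h2 : (2 * j' + 1).choose j' = (2 * j' + 1).choose (j' + 1) := by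
    rw [← Nat.choose_symm (show j' ≤ 2 * j' + 1 by omega),
      show 2 * j' + 1 - j' = j' + 1 by omega]
  rw [h2]
  show 2 ∣ (2 * j' + 1).choose (j' + 1) + (2 * j' + 1).choose (j' + 1)
  omega

lemma S_dvd (p : ℕ) (hp : p.Prime) (hp3 : 3 ≤ p) (n : ℕ) (hn : 1 ≤ n) :
    ((2 * p ^ 2 : ℕ) : ℤ) ∣ ∑ k ∈ range (n + 1), (-1) ^ k * ((p * n).choose (p * k) : ℤ) := by
  set S : ℤ := ∑ k ∈ range (n + 1), (-1) ^ k * ((p * n).choose (p * k) : ℤ) with hS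
  -- p² divides S
  have hp2 : ((p ^ 2 : ℕ) : ℤ) ∣ S := by
    rw [← ZMod.intCast_zmod_eq_zero_iff_dvd, hS]
    push_cast
    rw [Finset.sum_congr rfl (fun k _ => by rw [choose_mul_modeq p hp n k])]
    have h := Int.alternating_sum_range_choose (n := n)
    rw [if_neg (by omega)] at h
    have h' := congrArg (fun z : ℤ => (z : ZMod (p^2))) h
    push_cast at h'
    exact h'
  -- 2 divides S
  have h2 : ((2 : ℕ) : ℤ) ∣ S := by
    rcases Nat.even_or_odd n with he | ho
    · -- n even: S ≡ central binom mod 2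
      obtain ⟨m, rfl⟩ := he
      have hm : 1 ≤ m := by omega
      rw [← ZMod.intCast_zmod_eq_zero_iff_dvd, hS]
      push_cast
      have hneg : (-1 : ZMod 2) = 1 := by decide
      rw [Finset.sum_congr rfl (fun k _ => by rw [hneg, one_pow, one_mul])]
      set a : ℕ → ZMod 2 := fun k => (((p * (m + m)).choose (p * k) : ℕ) : ZMod 2) with hadef
      show ∑ k ∈ range (m + m + 1), a k = 0
      have hsymm : ∀ j ≤ m + m, a (m + m - j) = a j := by
        intro j hj
        simp only [hadef]
        rw [show p * (m + m - j) = p * (m + m) - p * j by rw [Nat.mul_sub]]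
        rw [Nat.choose_symm (Nat.mul_le_mul_left p hj)]
      have hsp1 : ∑ k ∈ range (m + m + 1), a k
          = (∑ k ∈ Ico 0 m, a k) + ∑ k ∈ Ico m (m + m + 1), a k := by
        rw [Finset.range_eq_Ico, ← Finset.sum_Ico_consecutive a (Nat.zero_le m) (by omega)]
      have hsp2 : ∑ k ∈ Ico m (m + m + 1), a k
          = a m + ∑ k ∈ Ico (m + 1) (m + m + 1), a k :=
        Finset.sum_eq_sum_Ico_succ_bot (by omega) a
      have hsplit : ∑ k ∈ range (m + m + 1), a k
          = (∑ k ∈ range m, a k) + (a m + ∑ k ∈ Ico (m + 1) (m + m + 1), a k) := by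
        rw [hsp1, hsp2, Finset.range_eq_Ico]
      have hrefl : ∑ k ∈ Ico (m + 1) (m + m + 1), a k = ∑ k ∈ range m, a k := by
        have h := Finset.sum_Ico_reflect a 0 (m := m) (n := m + m) (by omega)
        rw [show m + m + 1 - m = m + 1 by omega, show m + m + 1 - 0 = m + m + 1 by omega] at h
        rw [← h, Finset.range_eq_Ico]
        exact Finset.sum_congr rfl (fun j hj => by
          rw [Finset.mem_Ico] at hj; exact hsymm j (by omega))
      rw [hsplit, hrefl]
      have hcancel : ∀ x y : ZMod 2, x + (y + x) = y := by decide
      rw [hcancel]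
      -- a m = centralBinom (p*m) mod 2 = 0
      have h2m : p * (m + m) = 2 * (p * m) := by ring
      simp only [hadef]
      rw [h2m]
      exact (ZMod.natCast_eq_zero_iff _ 2).mpr
        (two_dvd_central (p * m) (Nat.mul_pos hp.pos hm))
    · -- n odd : S = 0
      have hrev := Finset.sum_range_reflect
        (fun k => (-1 : ℤ) ^ k * ((p * n).choose (p * k) : ℤ)) (n + 1)
      have heq : ∀ j ∈ range (n + 1),
          (-1 : ℤ) ^ (n + 1 - 1 - j) * ((p * n).choose (p * (n + 1 - 1 - j)) : ℤ)
          = -((-1) ^ j * ((p * n).choose (p * j) : ℤ)) := by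
        intro j hj
        rw [Finset.mem_range] at hj
        have hjn : j ≤ n := by omega
        rw [show n + 1 - 1 - j = n - j by omega]
        rw [show p * (n - j) = p * n - p * j by rw [Nat.mul_sub]]
        rw [Nat.choose_symm (Nat.mul_le_mul_left p hjn)]
        have hmul : (-1 : ℤ) ^ (n - j) * (-1) ^ j = -1 := by
          rw [← pow_add, show n - j + j = n by omega, Odd.neg_one_pow ho]
        have hj2 : ((-1 : ℤ) ^ j) * ((-1) ^ j) = 1 := by
          rw [← pow_add, Even.neg_one_pow ⟨j, by ring⟩]
        have hsign : (-1 : ℤ) ^ (n - j) = -(-1) ^ j := by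
          calc (-1 : ℤ) ^ (n - j) = (-1) ^ (n - j) * ((-1) ^ j * (-1) ^ j) := by
                rw [hj2, mul_one]
            _ = ((-1) ^ (n - j) * (-1) ^ j) * (-1) ^ j := by ring
            _ = -(-1) ^ j := by rw [hmul]; ring
        rw [hsign]; ring
      rw [Finset.sum_congr rfl heq, Finset.sum_neg_distrib] at hrev
      have hS0 : S = 0 := by omega
      rw [hS0]
      exact dvd_zero _
  -- combine
  have hoddp : Odd p := hp.odd_of_ne_two (by omega)
  have hndvd : ¬ (2 : ℤ) ∣ (p : ℤ) := by
    intro hd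
    have : (2 : ℕ) ∣ p := by exact_mod_cast hd
    exact (Nat.not_even_iff_odd.mpr hoddp) (even_iff_two_dvd.mpr this)
  have hcop : IsCoprime (2 : ℤ) ((p : ℤ) ^ 2) :=
    ((Int.prime_two.coprime_iff_not_dvd).mpr hndvd).pow_right
  have := hcop.mul_dvd (by exact_mod_cast h2) (by exact_mod_cast hp2)
  exact_mod_cast this



section PS
variable (p : ℕ) (hp : 0 < p)

noncomputable def Fser (p : ℕ) : PowerSeries ℚ :=
  PowerSeries.mk fun m => if p ∣ m then (1 : ℚ) / m.factorial else 0

lemma Fser_const : PowerSeries.constantCoeff (Fser p) ≠ 0 := by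
  rw [← PowerSeries.coeff_zero_eq_constantCoeff, Fser, PowerSeries.coeff_mk]
  simp

lemma G_vanish (hp : 0 < p) : ∀ m, ¬ p ∣ m → PowerSeries.coeff (R := ℚ) m (Fser p)⁻¹ = 0 := by
  intro m
  induction m using Nat.strong_induction_on with
  | _ m ih =>
    intro hm
    have hm0 : m ≠ 0 := by rintro rfl; exact hm (dvd_zero p)
    have hmul : PowerSeries.coeff (R := ℚ) m ((Fser p) * (Fser p)⁻¹) = 0 := by
      rw [PowerSeries.mul_inv_cancel _ (Fser_const p), PowerSeries.coeff_one, if_neg hm0]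
    rw [PowerSeries.coeff_mul, Finset.Nat.sum_antidiagonal_eq_sum_range_succ_mk] at hmul
    rw [Finset.sum_eq_single 0 ?h1 ?h2] at hmul
    · simpa [Fser, PowerSeries.coeff_mk, Nat.sub_zero] using hmul
    · intro i hi hi0
      by_cases hdvd : p ∣ i
      · have h1 : ¬ p ∣ m - i := by
          intro h
          have him : i ≤ m := Nat.lt_succ_iff.mp (Finset.mem_range.mp hi)
          exact hm (by simpa [Nat.sub_add_cancel him] using Nat.dvd_add h hdvd)
        have h2 : m - i < m := by
          have : 0 < i := Nat.pos_of_ne_zero hi0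
          omega
        rw [ih _ h2 h1, mul_zero]
      · rw [show PowerSeries.coeff (R := ℚ) i (Fser p) = 0 by
          rw [Fser, PowerSeries.coeff_mk, if_neg hdvd], zero_mul]
    · intro h
      simp at h

lemma recurrence (hp : 0 < p) (n : ℕ) (hn : 1 ≤ n) :
    ∑ k ∈ range (n + 1), ((p * n).choose (p * k) : ℚ) * genEulerQ p (p * k) = 0 := by
  have hmul : PowerSeries.coeff (R := ℚ) (p * n) ((Fser p) * (Fser p)⁻¹) = 0 := by
    rw [PowerSeries.mul_inv_cancel _ (Fser_const p), PowerSeries.coeff_one,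
      if_neg (by positivity)]
  rw [PowerSeries.coeff_mul, Finset.Nat.sum_antidiagonal_eq_sum_range_succ_mk] at hmul
  -- restrict to multiples of p
  set f : ℕ → ℚ := fun i => PowerSeries.coeff (R := ℚ) i (Fser p) * PowerSeries.coeff (R := ℚ) (p * n - i) (Fser p)⁻¹ with hf
  have hinj : ∀ a ∈ range (n + 1), ∀ b ∈ range (n + 1), p * a = p * b → a = b :=
    fun a _ b _ h => Nat.eq_of_mul_eq_mul_left hp h
  have himg : ∑ i ∈ (range (n + 1)).image (fun k => p * k), f i
      = ∑ k ∈ range (n + 1), f (p * k) := Finset.sum_image hinj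
  have hres : ∑ i ∈ range (p * n + 1), f i = ∑ k ∈ range (n + 1), f (p * k) := by
    rw [← himg]
    symm
    apply Finset.sum_subset
    · intro x hx
      simp only [Finset.mem_image, Finset.mem_range] at hx ⊢
      obtain ⟨k, hk, rfl⟩ := hx
      have : p * k ≤ p * n := Nat.mul_le_mul_left p (by omega)
      omega
    · intro x hx hnx
      simp only [Finset.mem_image, Finset.mem_range] at hx hnx
      have hndvd : ¬ p ∣ x := by
        intro ⟨c, hc⟩
        exact hnx ⟨c, by
          constructor
          · subst hc
            have := Nat.le_of_lt_succ hx
            have : c ≤ n := Nat.le_of_mul_le_mul_left (by omega) hp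
            omega
          · omega⟩
      rw [hf]
      simp only
      rw [show PowerSeries.coeff (R := ℚ) x (Fser p) = 0 by
        rw [Fser, PowerSeries.coeff_mk, if_neg hndvd], zero_mul]
  rw [hres] at hmul
  -- now convert each term
  have hterm : ∀ k ∈ range (n + 1),
      ((p * n).factorial : ℚ) * f (p * k)
      = ((p * n).choose (p * (n - k)) : ℚ) * genEulerQ p (p * (n - k)) := by
    intro k hk
    rw [Finset.mem_range] at hk
    have hkn : k ≤ n := by omega
    have hsub : p * n - p * k = p * (n - k) := by rw [Nat.mul_sub]
    have hle : p * k ≤ p * n := Nat.mul_le_mul_left p hkn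
    rw [hf]
    simp only
    rw [Fser, PowerSeries.coeff_mk, if_pos (dvd_mul_right p k), ← hsub,
      Nat.choose_symm hle, genEulerQ,
      show (PowerSeries.mk fun m => if p ∣ m then (1:ℚ)/m.factorial else 0) = Fser p from rfl]
    have hfact : ((p * n).choose (p * k) * (p * k).factorial * (p * n - p * k).factorial : ℚ)
        = ((p * n).factorial : ℚ) := by
      exact_mod_cast congrArg (Nat.cast : ℕ → ℚ) (Nat.choose_mul_factorial_mul_factorial hle)
    have hfkne : ((p * k).factorial : ℚ) ≠ 0 := Nat.cast_ne_zero.mpr (Nat.factorial_ne_zero _)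
    field_simp
    ring_nf
    ring_nf at hfact
    linear_combination -(PowerSeries.coeff (R := ℚ) (p * n - p * k) (Fser p)⁻¹) * hfact
  -- multiply hmul by (p*n)!
  have hmul2 : ∑ k ∈ range (n + 1),
      ((p * n).choose (p * (n - k)) : ℚ) * genEulerQ p (p * (n - k)) = 0 := by
    rw [← Finset.sum_congr rfl hterm, ← Finset.mul_sum, hmul, mul_zero]
  have hrefl := Finset.sum_range_reflect
    (fun j => ((p * n).choose (p * j) : ℚ) * genEulerQ p (p * j)) (n + 1)
  simp only [Nat.add_sub_cancel] at hrefl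
  rw [← hrefl]
  exact hmul2
end PS


noncomputable def Eint (p : ℕ) : ℕ → ℤ
  | 0 => 1
  | (n+1) => -∑ k ∈ (Finset.range (n+1)).attach,
      ((p * (n+1)).choose (p * k.1) : ℤ) * Eint p k.1
  decreasing_by exact Finset.mem_range.mp k.2

lemma Eint_zero (p : ℕ) : Eint p 0 = 1 := by rw [Eint]

lemma Eint_succ (p n : ℕ) :
    Eint p (n+1) = -∑ k ∈ Finset.range (n+1), ((p * (n+1)).choose (p * k) : ℤ) * Eint p k := by
  rw [Eint, ← Finset.sum_attach (Finset.range (n+1)) (fun k => ((p * (n+1)).choose (p * k) : ℤ) * Eint p k)]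


lemma genEulerQ_zero (p : ℕ) (hp : 0 < p) : genEulerQ p 0 = 1 := by
  rw [genEulerQ, show (PowerSeries.mk fun m => if p ∣ m then (1:ℚ)/m.factorial else 0) = Fser p from rfl]
  rw [PowerSeries.coeff_zero_eq_constantCoeff, PowerSeries.constantCoeff_inv]
  rw [show PowerSeries.constantCoeff (Fser p) = 1 by
    rw [← PowerSeries.coeff_zero_eq_constantCoeff, Fser, PowerSeries.coeff_mk]; simp]
  simp

lemma genEulerQ_eq_Eint (p : ℕ) (hp : 0 < p) :
    ∀ n : ℕ, genEulerQ p (p * n) = ((Eint p n : ℤ) : ℚ) := by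
  intro n
  induction n using Nat.strong_induction_on with
  | _ n ih =>
    match n with
    | 0 => rw [Nat.mul_zero, genEulerQ_zero p hp, Eint_zero]; norm_num
    | (n+1) =>
      have hrec := recurrence p hp (n+1) (by omega)
      rw [Finset.sum_range_succ, Nat.choose_self, Nat.cast_one, one_mul] at hrec
      have hsum : ∑ k ∈ Finset.range (n+1),
          ((p * (n+1)).choose (p * k) : ℚ) * genEulerQ p (p * k)
          = ∑ k ∈ Finset.range (n+1),
          ((p * (n+1)).choose (p * k) : ℚ) * ((Eint p k : ℤ) : ℚ) := by
        apply Finset.sum_congr rfl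
        intro k hk
        rw [ih k (Finset.mem_range.mp hk)]
      rw [hsum] at hrec
      have : genEulerQ p (p * (n+1))
          = -∑ k ∈ Finset.range (n+1), ((p * (n+1)).choose (p * k) : ℚ) * ((Eint p k : ℤ) : ℚ) := by
        linarith [hrec]
      rw [this, Eint_succ]
      push_cast
      ring

lemma Eint_congruent (p : ℕ) (hp : p.Prime) (hp3 : 3 ≤ p) :
    ∀ n : ℕ, ((2 * p ^ 2 : ℕ) : ℤ) ∣ Eint p n - (-1) ^ n := by
  intro n
  induction n using Nat.strong_induction_on with
  | _ n ih =>
    match n with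
    | 0 => rw [Eint_zero]; simp
    | (n+1) =>
      set M : ℤ := ((2 * p ^ 2 : ℕ) : ℤ) with hM
      set C : ℕ → ℤ := fun k => ((p * (n+1)).choose (p * k) : ℤ) with hC
      have hDdvd : M ∣ ∑ k ∈ Finset.range (n+1+1), (-1) ^ k * C k :=
        S_dvd p hp hp3 (n+1) (by omega)
      have hD' : ∑ k ∈ Finset.range (n+1+1), (-1) ^ k * C k
          = ∑ k ∈ Finset.range (n+1), (-1) ^ k * C k + (-1) ^ (n+1) := by
        rw [Finset.sum_range_succ, hC]
        simp [Nat.choose_self]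
      have hsum : ∑ k ∈ Finset.range (n+1), C k * Eint p k
          = ∑ k ∈ Finset.range (n+1), C k * (Eint p k - (-1) ^ k)
            + ∑ k ∈ Finset.range (n+1), (-1) ^ k * C k := by
        rw [← Finset.sum_add_distrib]
        apply Finset.sum_congr rfl
        intros; ring
      have hA : M ∣ ∑ k ∈ Finset.range (n+1), C k * (Eint p k - (-1) ^ k) :=
        Finset.dvd_sum fun k hk => (ih k (Finset.mem_range.mp hk)).mul_left (C k)
      have hkey : Eint p (n+1) - (-1) ^ (n+1)
          = -(∑ k ∈ Finset.range (n+1), C k * (Eint p k - (-1) ^ k))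
            - ∑ k ∈ Finset.range (n+1+1), (-1) ^ k * C k := by
        rw [Eint_succ, hsum, hD']
        ring
      rw [hkey]
      exact dvd_sub (dvd_neg.mpr hA) hDdvd

theorem stmt_13 (p n : ℕ) (hp : p.Prime) (hp3 : 3 ≤ p) :
    ∃ z : ℤ, genEulerQ p (p * n) = (z : ℚ) ∧ z ≡ (-1) ^ n [ZMOD (2 * p ^ 2)] := by
  refine ⟨Eint p n, genEulerQ_eq_Eint p hp.pos n, ?_⟩
  have h := Eint_congruent p hp hp3 n
  have h2 : ((2 * p ^ 2 : ℕ) : ℤ) = (2 * (p : ℤ) ^ 2) := by push_cast; ring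
  rw [h2] at h
  exact (Int.ModEq.symm (Int.modEq_iff_dvd.mpr (by exact_mod_cast h)))
end
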